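/- Let H be a finite graph with no involutions and let x and y be vertices of H lying in different orbits of Aut(H). Then there exists a rooted graph (Γ,γ) such that the number of homomorphisms from Γ to H sending γ to x is not congruent modulo 2 to the number of homomorphisms from Γ to H sending γ to y. -/

import Mathlib

structure SymGraph (V : Type) where
  Adj : V → V → Prop
  symm : ∀ u v, Adj u v → Adj v u

def SymGraph.IsHom {V W : Type} (G : SymGraph V) (H : SymGraph W) (f : V → W) : Prop :=
  ∀ u v, G.Adj u v → H.Adj (f u) (f v)

noncomputable def homCount {V W : Type} (G : SymGraph V) (H : SymGraph W) : ℕ :=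
  Nat.card {f : V → W // G.IsHom H f}

def SymGraph.IsAut {V : Type} (H : SymGraph V) (σ : Equiv.Perm V) : Prop :=
  ∀ u v, H.Adj u v ↔ H.Adj (σ u) (σ v)

def SymGraph.fixedSubgraph {V : Type} (H : SymGraph V) (σ : Equiv.Perm V) :
    SymGraph {v : V // σ v = v} :=
  ⟨fun u v => H.Adj u v, fun u v h => H.symm u v h⟩
/-- Number of homomorphisms from Γ to H sending γ to x. -/
noncomputable def homCountR {V W : Type} (G : SymGraph V) (g : V) (H : SymGraph W) (h : W) : ℕ :=
  Nat.card {f : V → W // G.IsHom H f ∧ f g = h}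


noncomputable def injCountR {V W : Type} (G : SymGraph V) (g : V) (H : SymGraph W) (h : W) : ℕ :=
  Nat.card {f : V → W // G.IsHom H f ∧ Function.Injective f ∧ f g = h}

def quotGraph {U : Type} (Γ : SymGraph U) (s : Setoid U) : SymGraph (Quotient s) :=
  ⟨fun a b => ∃ u v, Quotient.mk s u = a ∧ Quotient.mk s v = b ∧ Γ.Adj u v,
   by rintro a b ⟨u, v, hu, hv, h⟩; exact ⟨v, u, hv, hu, Γ.symm _ _ h⟩⟩

open Classical in
noncomputable instance setoidFintype (U : Type) [Fintype U] : Fintype (Setoid U) :=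
  Fintype.ofInjective (fun s : Setoid U => ⇑s) (fun s t h => Setoid.ext (by
    intro a b; exact iff_of_eq (congrFun (congrFun h a) b)))

/-- Fiber equivalence: homs with kernel `s` correspond to injective homs from the quotient. -/
noncomputable def fiberEquiv {U V : Type} (Γ : SymGraph U) (γ : U) (H : SymGraph V) (x : V)
    (s : Setoid U) :
    {f : U → V // (Γ.IsHom H f ∧ f γ = x) ∧ Setoid.ker f = s} ≃
    {g : Quotient s → V // (quotGraph Γ s).IsHom H g ∧ Function.Injective g ∧
        g (Quotient.mk s γ) = x} where
  toFun := fun p =>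
    ⟨Quotient.lift p.1 (fun a b hab => by
        have h2 : (Setoid.ker p.1) a b := by rw [p.2.2]; exact hab
        exact h2),
     by
      constructor
      · rintro a b ⟨u, v, hu, hv, huv⟩
        subst hu; subst hv
        exact p.2.1.1 u v huv
      constructor
      · intro a b
        induction a using Quotient.ind
        induction b using Quotient.ind
        rename_i u v
        intro h
        have h2 : (Setoid.ker p.1) u v := h
        rw [p.2.2] at h2
        exact Quotient.sound h2
      · exact p.2.1.2⟩
  invFun := fun q =>
    ⟨fun u => q.1 (Quotient.mk s u),
     ⟨⟨fun u v huv => q.2.1 _ _ ⟨u, v, rfl, rfl, huv⟩, q.2.2.2⟩,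
      Setoid.ext fun u v => by
        constructor
        · intro h
          exact Quotient.exact (q.2.2.1 (h : q.1 _ = q.1 _))
        · intro h
          exact congrArg q.1 (Quotient.sound h)⟩⟩
  left_inv := fun p => Subtype.ext (funext fun u => rfl)
  right_inv := fun q => Subtype.ext (funext fun a => by
    induction a using Quotient.ind; rfl)


open Classical in
lemma hom_eq_sum {U V : Type} [Fintype U] [Fintype V] (Γ : SymGraph U) (γ : U) (H : SymGraph V)
    (x : V) :
    homCountR Γ γ H x = injCountR Γ γ H x +
      ∑ s ∈ (Finset.univ.erase (⊥ : Setoid U)),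
        injCountR (quotGraph Γ s) (Quotient.mk s γ) H x := by
  classical
  have e1 : {f : U → V // Γ.IsHom H f ∧ f γ = x} ≃
      Σ s : Setoid U, {f : U → V // (Γ.IsHom H f ∧ f γ = x) ∧ Setoid.ker f = s} := by
    refine (Equiv.sigmaFiberEquiv (fun p : {f : U → V // Γ.IsHom H f ∧ f γ = x} =>
      Setoid.ker p.1)).symm.trans (Equiv.sigmaCongrRight fun s => ?_)
    exact (Equiv.subtypeSubtypeEquivSubtypeInter
      (fun f : U → V => Γ.IsHom H f ∧ f γ = x) (fun f => Setoid.ker f = s))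
  have h1 : homCountR Γ γ H x =
      ∑ s : Setoid U, Nat.card {f : U → V // (Γ.IsHom H f ∧ f γ = x) ∧ Setoid.ker f = s} := by
    rw [homCountR, Nat.card_congr e1]
    simp [Nat.card_eq_fintype_card, Fintype.card_sigma]
  -- replace each fiber count with injCountR of quotient, and the ⊥ fiber with injCountR Γ
  have h2 : ∀ s : Setoid U,
      Nat.card {f : U → V // (Γ.IsHom H f ∧ f γ = x) ∧ Setoid.ker f = s} =
      injCountR (quotGraph Γ s) (Quotient.mk s γ) H x :=
    fun s => Nat.card_congr (fiberEquiv Γ γ H x s)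
  have h3 : Nat.card {f : U → V // (Γ.IsHom H f ∧ f γ = x) ∧ Setoid.ker f = ⊥} =
      injCountR Γ γ H x := by
    apply Nat.card_congr
    refine Equiv.subtypeEquiv (Equiv.refl _) fun f => ?_
    simp only [Equiv.refl_apply]
    rw [← Setoid.injective_iff_ker_bot]
    tauto
  rw [h1, ← Finset.add_sum_erase Finset.univ _ (Finset.mem_univ (⊥ : Setoid U)), h3]
  congr 1
  exact Finset.sum_congr rfl fun s _ => h2 s

open Classical in
lemma quot_card_lt {U : Type} [Fintype U] (s : Setoid U) (hs : s ≠ ⊥) :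
    Nat.card (Quotient s) < Fintype.card U := by
  classical
  have hsur : Function.Surjective (Quotient.mk s) := Quotient.mk_surjective
  have : Fintype (Quotient s) := Fintype.ofSurjective _ hsur
  rw [Nat.card_eq_fintype_card]
  refine Fintype.card_lt_of_surjective_not_injective _ hsur ?_
  intro hinj
  apply hs
  apply Setoid.ext
  intro a b
  constructor
  · intro h
    exact hinj (Quotient.sound h)
  · intro h
    subst h; exact Setoid.refl _

open Classical in
lemma inj_congr {V : Type} [Fintype V] (H : SymGraph V) (x y : V)
    (hhom : ∀ (U : Type) (_ : Fintype U) (Γ : SymGraph U) (γ : U),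
        homCountR Γ γ H x ≡ homCountR Γ γ H y [MOD 2]) :
    ∀ (n : ℕ) (U : Type) (_ : Fintype U), Fintype.card U ≤ n → ∀ (Γ : SymGraph U) (γ : U),
      (injCountR Γ γ H x : ZMod 2) = injCountR Γ γ H y := by
  intro n
  induction n with
  | zero =>
    intro U _ hc Γ γ
    have : IsEmpty U := Fintype.card_eq_zero_iff.mp (Nat.le_zero.mp hc)
    exact (this.false γ).elim
  | succ n ih =>
    intro U _ hc Γ γ
    have hx := hom_eq_sum Γ γ H x
    have hy := hom_eq_sum Γ γ H y
    have hcast : (homCountR Γ γ H x : ZMod 2) = homCountR Γ γ H y :=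
      (ZMod.natCast_eq_natCast_iff _ _ _).mpr (hhom U ‹Fintype U› Γ γ)
    have hsum : ∀ s ∈ Finset.univ.erase (⊥ : Setoid U),
        (injCountR (quotGraph Γ s) (Quotient.mk s γ) H x : ZMod 2) =
        injCountR (quotGraph Γ s) (Quotient.mk s γ) H y := by
      intro s hs
      have hlt := quot_card_lt s (Finset.ne_of_mem_erase hs)
      have : Fintype (Quotient s) := Fintype.ofSurjective _ Quotient.mk_surjective
      rw [Nat.card_eq_fintype_card] at hlt
      exact ih (Quotient s) this (by omega) (quotGraph Γ s) (Quotient.mk s γ)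
    have ex : (homCountR Γ γ H x : ZMod 2) = injCountR Γ γ H x +
        ∑ s ∈ Finset.univ.erase (⊥ : Setoid U),
          (injCountR (quotGraph Γ s) (Quotient.mk s γ) H x : ZMod 2) := by
      rw [hx]; push_cast; ring
    have ey : (homCountR Γ γ H y : ZMod 2) = injCountR Γ γ H y +
        ∑ s ∈ Finset.univ.erase (⊥ : Setoid U),
          (injCountR (quotGraph Γ s) (Quotient.mk s γ) H y : ZMod 2) := by
      rw [hy]; push_cast; ring
    have hss := Finset.sum_congr rfl hsum
    rw [ex, hss] at hcast
    rw [ey] at hcast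
    exact add_right_cancel hcast

lemma iterate_hom {V : Type} (H : SymGraph V) (f : V → V) (hf : H.IsHom H f) :
    ∀ m, H.IsHom H (f^[m]) := by
  intro m
  induction m with
  | zero => intro u v h; simpa using h
  | succ m ih =>
    intro u v h
    rw [Function.iterate_succ_apply', Function.iterate_succ_apply']
    exact hf _ _ (ih u v h)

open Classical in
lemma exists_aut_of_inj {V : Type} [Fintype V] (H : SymGraph V) (f : V → V)
    (hf : H.IsHom H f) (hinj : Function.Injective f) :
    H.IsAut (Equiv.ofBijective f (Finite.injective_iff_bijective.mp hinj)) := by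
  classical
  set σ := Equiv.ofBijective f (Finite.injective_iff_bijective.mp hinj) with hσ
  have hco : ⇑σ = f := rfl
  set k := orderOf σ with hk
  have hkpos : 0 < k := orderOf_pos σ
  have hiter : f^[k] = id := by
    have : σ ^ k = 1 := pow_orderOf_eq_one σ
    have h2 : ⇑(σ ^ k) = ⇑(1 : Equiv.Perm V) := by rw [this]
    rwa [Equiv.Perm.coe_pow, hco, Equiv.Perm.coe_one] at h2
  intro u v
  constructor
  · intro h; exact hf u v h
  · intro h
    have h' : H.Adj (f u) (f v) := h
    have h2 := iterate_hom H f hf (k - 1) _ _ h' 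
    rw [← Function.iterate_succ_apply, ← Function.iterate_succ_apply] at h2
    rw [Nat.succ_eq_add_one, Nat.sub_add_cancel hkpos, hiter] at h2
    exact h2

def autGroup {V : Type} (H : SymGraph V) : Subgroup (Equiv.Perm V) where
  carrier := {σ | H.IsAut σ}
  one_mem' := by intro u v; simp
  mul_mem' := by
    intro σ τ hσ hτ u v
    exact (hτ u v).trans (hσ (τ u) (τ v))
  inv_mem' := by
    intro σ hσ u v
    have := hσ (σ⁻¹ u) (σ⁻¹ v)
    simp only [Equiv.Perm.coe_inv, Equiv.apply_symm_apply] at this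
    exact this.symm

def stabGroup {V : Type} (H : SymGraph V) (x : V) : Subgroup (Equiv.Perm V) where
  carrier := {σ | H.IsAut σ ∧ σ x = x}
  one_mem' := ⟨by intro u v; simp, rfl⟩
  mul_mem' := by
    rintro σ τ ⟨hσ, hσx⟩ ⟨hτ, hτx⟩
    refine ⟨fun u v => (hτ u v).trans (hσ (τ u) (τ v)), ?_⟩
    simp [hτx, hσx]
  inv_mem' := by
    rintro σ ⟨hσ, hσx⟩
    refine ⟨fun u v => ?_, ?_⟩
    · have := hσ (σ⁻¹ u) (σ⁻¹ v)
      simp only [Equiv.Perm.coe_inv, Equiv.apply_symm_apply] at this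
      exact this.symm
    · exact (Equiv.Perm.inv_eq_iff_eq).mpr hσx.symm

open Classical in
lemma autGroup_odd {V : Type} [Fintype V] (H : SymGraph V)
    (hinv : ¬∃ σ : Equiv.Perm V, H.IsAut σ ∧ orderOf σ = 2) :
    Odd (Nat.card (autGroup H)) := by
  classical
  rw [Nat.odd_iff]
  by_contra h
  have h2 : 2 ∣ Nat.card (autGroup H) := by omega
  rw [Nat.card_eq_fintype_card] at h2
  have : Fact (Nat.Prime 2) := ⟨Nat.prime_two⟩
  obtain ⟨g, hg⟩ := exists_prime_orderOf_dvd_card (G := autGroup H) 2 h2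
  refine hinv ⟨(g : Equiv.Perm V), g.2, ?_⟩
  rw [← hg]
  exact (orderOf_injective (autGroup H).subtype Subtype.coe_injective g)

open Classical in
lemma injCount_self_odd {V : Type} [Fintype V] (H : SymGraph V)
    (hinv : ¬∃ σ : Equiv.Perm V, H.IsAut σ ∧ orderOf σ = 2) (x : V) :
    Odd (injCountR H x H x) := by
  classical
  have hcard : injCountR H x H x = Nat.card (stabGroup H x) := by
    apply Nat.card_congr
    refine ⟨fun p => ⟨Equiv.ofBijective p.1 (Finite.injective_iff_bijective.mp p.2.2.1),
        ⟨exists_aut_of_inj H p.1 p.2.1 p.2.2.1, p.2.2.2⟩⟩,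
      fun q => ⟨⇑(q.1 : Equiv.Perm V), fun u v h => (q.2.1 u v).mp h, q.1.injective, q.2.2⟩,
      fun p => Subtype.ext (funext fun u => rfl),
      fun q => Subtype.ext (Equiv.ext fun u => rfl)⟩
  rw [hcard]
  have hle : stabGroup H x ≤ autGroup H := fun σ hσ => hσ.1
  have hdvd := Subgroup.card_dvd_of_le hle
  have hodd := autGroup_odd H hinv
  rw [Nat.odd_iff] at hodd ⊢
  by_contra h
  have : 2 ∣ Nat.card (stabGroup H x) := by omega
  have := this.trans hdvd
  omega

open Classical in
lemma injCount_other_zero {V : Type} [Fintype V] (H : SymGraph V) (x y : V)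
    (horb : ¬∃ σ : Equiv.Perm V, H.IsAut σ ∧ σ x = y) :
    injCountR H x H y = 0 := by
  rw [injCountR, Nat.card_eq_zero]
  left
  refine ⟨fun p => ?_⟩
  exact horb ⟨Equiv.ofBijective p.1 (Finite.injective_iff_bijective.mp p.2.2.1),
    exists_aut_of_inj H p.1 p.2.1 p.2.2.1, p.2.2.2⟩


/-- For an involution-free H and vertices x, y in different orbits of Aut(H),
some rooted graph (Γ,γ) distinguishes x and y modulo 2. -/
theorem stmt8 {V : Type} [Fintype V] (H : SymGraph V)
    (hinv : ¬∃ σ : Equiv.Perm V, H.IsAut σ ∧ orderOf σ = 2)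
    (x y : V) (horb : ¬∃ σ : Equiv.Perm V, H.IsAut σ ∧ σ x = y) :
    ∃ (U : Type) (_ : Fintype U) (Γ : SymGraph U) (γ : U),
      ¬(homCountR Γ γ H x ≡ homCountR Γ γ H y [MOD 2]) := by
  by_contra hcon
  push_neg at hcon
  have key := inj_congr H x y (fun U instU Γ γ => hcon U instU Γ γ)
    (Fintype.card V) V ‹Fintype V› le_rfl H x
  rw [injCount_other_zero H x y horb] at key
  have hodd := injCount_self_odd H hinv x
  rw [Nat.odd_iff] at hodd
  have : ((injCountR H x H x : ℕ) : ZMod 2) = 1 := by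
    rw [← ZMod.natCast_mod, hodd]; rfl
  rw [this] at key
  simp at key
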